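/- Let Γ be a group, u : Γ → SO(2) a group homomorphism, and c : Γ → ℝ² a map such that the set { c(g h) − u(g) c(h) − c(g) : g, h ∈ Γ } is bounded in ℝ² (c is a u-quasicocycle). Define f : Γ → GL_3(ℝ) by f(γ) := [[u(γ), c(γ)], [0, 1]] (block form). Then f is a quasihomomorphism; more precisely, there is a bounded subset K ⊆ ℝ² such that the defect set D_f is contained in { [[I, w], [0, 1]] : w ∈ K }. -/

import Mathlib

open scoped MatrixGroups
open Matrix

/-- The defect set of a map `f : Γ → G`:
`D_f = { f(y)⁻¹ f(x)⁻¹ f(xy) : x, y ∈ Γ }`. -/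
def defectSet {Γ G : Type*} [Group Γ] [Group G] (f : Γ → G) : Set G :=
  {d | ∃ x y : Γ, d = (f y)⁻¹ * (f x)⁻¹ * f (x * y)}

/-- `R ∈ SO(2)`: a 2×2 real matrix with `Rᵀ R = I` and `det R = 1`. -/
def IsSO2 (R : Matrix (Fin 2) (Fin 2) ℝ) : Prop := Rᵀ * R = 1 ∧ R.det = 1

/-- The 3×3 block matrix `[[R, v], [0, 1]]`. -/
def mkAff (R : Matrix (Fin 2) (Fin 2) ℝ) (v : Fin 2 → ℝ) :
    Matrix (Fin 3) (Fin 3) ℝ :=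
  Matrix.of fun i j =>
    if hi : (i : ℕ) < 2 then
      if hj : (j : ℕ) < 2 then R ⟨i, hi⟩ ⟨j, hj⟩ else v ⟨i, hi⟩
    else if (j : ℕ) < 2 then 0 else 1

lemma mkAff_mul (R R' : Matrix (Fin 2) (Fin 2) ℝ) (v v' : Fin 2 → ℝ) :
    mkAff R v * mkAff R' v' = mkAff (R * R') (R.mulVec v' + v) := by
  ext i j
  fin_cases i <;> fin_cases j <;>
    simp [mkAff, Matrix.mul_apply, Fin.sum_univ_three, Matrix.mulVec, dotProduct,
      Fin.sum_univ_two, Fin.isValue]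

lemma mkAff_one : mkAff 1 0 = (1 : Matrix (Fin 3) (Fin 3) ℝ) := by
  ext i j
  fin_cases i <;> fin_cases j <;> simp [mkAff, Matrix.one_apply]

noncomputable def affUnit (w : Fin 2 → ℝ) : GL (Fin 3) ℝ :=
  ⟨mkAff 1 w, mkAff 1 (-w),
    by rw [mkAff_mul]; simp [mkAff_one],
    by rw [mkAff_mul]; simp [mkAff_one]⟩

lemma continuous_mkAff_one : Continuous (fun w : Fin 2 → ℝ => mkAff 1 w) := by
  apply continuous_matrix
  intro i j
  simp only [mkAff, Matrix.of_apply]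
  split_ifs with h1 h2
  · exact continuous_const
  · exact continuous_apply _
  · exact continuous_const
  · exact continuous_const

lemma continuous_affUnit : Continuous affUnit := by
  apply Units.continuous_iff.2
  exact ⟨continuous_mkAff_one, continuous_mkAff_one.comp continuous_neg⟩

/-- If `u : Γ → SO(2)` is a homomorphism and `c : Γ → ℝ²` a `u`-quasicocycle, then
`γ ↦ [[u(γ), c(γ)], [0, 1]]` is a quasihomomorphism whose defect set consists of
translations `[[I, w], [0, 1]]` with `w` in a bounded subset of `ℝ²`. -/
theorem quasicocycle_gives_quasihomomorphism {Γ : Type*} [Group Γ]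
    (u : Γ → Matrix (Fin 2) (Fin 2) ℝ)
    (huhom : ∀ g h : Γ, u (g * h) = u g * u h)
    (huSO : ∀ g : Γ, IsSO2 (u g))
    (c : Γ → Fin 2 → ℝ)
    (hqc : ∃ K : Set (Fin 2 → ℝ), IsCompact K ∧
      ∀ g h : Γ, c (g * h) - (u g).mulVec (c h) - c g ∈ K)
    (f : Γ → GL (Fin 3) ℝ)
    (hf : ∀ γ : Γ, (f γ : Matrix (Fin 3) (Fin 3) ℝ) = mkAff (u γ) (c γ)) :
    (∃ K : Set (GL (Fin 3) ℝ), IsCompact K ∧ defectSet f ⊆ K) ∧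
    ∃ K : Set (Fin 2 → ℝ),
      (∃ K' : Set (Fin 2 → ℝ), IsCompact K' ∧ K ⊆ K') ∧
      defectSet f ⊆
        {g : GL (Fin 3) ℝ | ∃ w ∈ K, (g : Matrix (Fin 3) (Fin 3) ℝ) = mkAff 1 w} := by
  obtain ⟨K0, hK0c, hK0⟩ := hqc
  obtain ⟨C, hC⟩ := hK0c.isBounded.subset_closedBall 0
  set B := Metric.closedBall (0 : Fin 2 → ℝ) (2 * max C 0) with hB
  -- main claim: every defect element is affUnit w for some w ∈ B
  have key : ∀ g ∈ defectSet f, ∃ w ∈ B, g = affUnit w := by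
    rintro g ⟨x, y, rfl⟩
    set A := u (x * y) with hA
    set d := c (x * y) - (u x).mulVec (c y) - c x with hd
    set w := Aᵀ.mulVec d with hw
    have hdK : d ∈ K0 := hK0 x y
    have hAAt : A * Aᵀ = 1 := mul_eq_one_comm.mp (huSO (x * y)).1
    -- algebraic identity: f x * f y * affUnit w = f (x*y)
    have hmain : f x * f y * affUnit w = f (x * y) := by
      apply Units.ext
      show ((f x : Matrix (Fin 3) (Fin 3) ℝ) * (f y : Matrix (Fin 3) (Fin 3) ℝ))
          * (mkAff 1 w) = (f (x * y) : Matrix (Fin 3) (Fin 3) ℝ)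
      have hAw : A.mulVec w = d := by
        rw [hw, Matrix.mulVec_mulVec, hAAt, Matrix.one_mulVec]
      have hv : d + ((u x).mulVec (c y) + c x) = c (x * y) := by
        rw [hd]; abel
      rw [hf x, hf y, hf (x * y), mkAff_mul, mkAff_mul, ← huhom, ← hA, mul_one, hAw, hv]
    have hg : (f y)⁻¹ * (f x)⁻¹ * f (x * y) = affUnit w := by
      rw [← _root_.mul_inv_rev]
      exact inv_mul_eq_iff_eq_mul.mpr hmain.symm
    refine ⟨w, ?_, hg⟩
    -- bound on w
    have hdC : ‖d‖ ≤ C := by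
      have := hC hdK
      simpa using this
    have hdC' : ∀ j, |d j| ≤ max C 0 :=
      fun j => le_trans (le_trans (norm_le_pi_norm d j) hdC) (le_max_left _ _)
    have hent : ∀ i j : Fin 2, |A i j| ≤ 1 := by
      intro i j
      have h1 : (Aᵀ * A) j j = 1 := by rw [(huSO (x * y)).1]; simp
      have h2 : A 0 j * A 0 j + A 1 j * A 1 j = 1 := by
        simpa [Matrix.mul_apply, Fin.sum_univ_two, Matrix.transpose_apply] using h1
      have hsq : A i j ^ 2 ≤ 1 := by
        fin_cases i
        · show A 0 j ^ 2 ≤ 1; nlinarith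
        · show A 1 j ^ 2 ≤ 1; nlinarith
      exact abs_le_one_iff_mul_self_le_one.mpr (by rw [← pow_two]; exact hsq)
    rw [hB, Metric.mem_closedBall, dist_zero_right]
    apply pi_norm_le_iff_of_nonneg (by positivity) |>.mpr
    intro i
    have hwi : w i = A 0 i * d 0 + A 1 i * d 1 := by
      simp [hw, Matrix.mulVec, dotProduct, Fin.sum_univ_two, Matrix.transpose_apply]
      fin_cases i <;> rfl
    rw [Real.norm_eq_abs, hwi]
    calc |A 0 i * d 0 + A 1 i * d 1| ≤ |A 0 i| * |d 0| + |A 1 i| * |d 1| := by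
          apply (abs_add_le _ _).trans; rw [abs_mul, abs_mul]
      _ ≤ 1 * max C 0 + 1 * max C 0 := by
          gcongr <;> first | exact hent _ _ | exact hdC' _
      _ = 2 * max C 0 := by ring
  constructor
  · refine ⟨affUnit '' B, (isCompact_closedBall _ _).image continuous_affUnit, ?_⟩
    intro g hg
    obtain ⟨w, hwB, rfl⟩ := key g hg
    exact ⟨w, hwB, rfl⟩
  · refine ⟨B, ⟨B, isCompact_closedBall _ _, subset_rfl⟩, ?_⟩
    intro g hg
    obtain ⟨w, hwB, rfl⟩ := key g hg
    exact ⟨w, hwB, rfl⟩
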